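/- Fix γ > 0, γ ≠ 1, η > 0, φ ∈ ℝ, and let u(c) = (γ/(1−γ))[(φ + (η/γ)c)^{1−γ} − 1]. Let θ ∈ (0,1)ⁿ with ∑ᵢθⁱ = 1, x > 0, and suppose each share sⁱ := aⁱ(θ)x + (γφ/η)(n·aⁱ(θ) − 1) satisfies φ + (η/γ)sⁱ > 0, where aⁱ(θ) = (θⁱ)^{1/γ}/∑ⱼ(θʲ)^{1/γ}. Then ∑ᵢ θⁱ u(sⁱ) = (γ/(1−γ))[(∑ᵢ(θⁱ)^{1/γ})^γ · (φn + (η/γ)x)^{1−γ} − 1]. -/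

import Mathlib

open Finset

theorem stmt_10 (n : ℕ) (γ η φ : ℝ) (hγ : 0 < γ) (hγ1 : γ ≠ 1) (hη : 0 < η)
    (u : ℝ → ℝ)
    (hu : ∀ c, u c = (γ / (1 - γ)) * ((φ + (η / γ) * c) ^ (1 - γ) - 1))
    (θ : Fin n → ℝ) (hθ0 : ∀ i, 0 < θ i) (hθ1 : ∀ i, θ i < 1) (hθsum : ∑ i, θ i = 1)
    (x : ℝ) (hx : 0 < x)
    (a : Fin n → ℝ) (ha : ∀ i, a i = (θ i) ^ (1 / γ) / ∑ j, (θ j) ^ (1 / γ))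
    (s : Fin n → ℝ) (hs : ∀ i, s i = a i * x + (γ * φ / η) * (n * a i - 1))
    (hspos : ∀ i, 0 < φ + (η / γ) * s i) :
    ∑ i, θ i * u (s i) =
      (γ / (1 - γ)) * ((∑ i, (θ i) ^ (1 / γ)) ^ γ * (φ * n + (η / γ) * x) ^ (1 - γ) - 1) := by
  have hγ0 : γ ≠ 0 := ne_of_gt hγ
  have hη0 : η ≠ 0 := ne_of_gt hη
  have hn : 0 < n := by
    rcases Nat.eq_zero_or_pos n with h | h
    · exfalso; subst h; simp at hθsum
    · exact h
  set S := ∑ j, θ j ^ (1 / γ) with hS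
  have hSpos : 0 < S := by
    have : Nonempty (Fin n) := Fin.pos_iff_nonempty.mp hn
    exact Finset.sum_pos (fun i _ => Real.rpow_pos_of_pos (hθ0 i) _) univ_nonempty
  have hapos : ∀ i, 0 < a i := by
    intro i; rw [ha]
    exact div_pos (Real.rpow_pos_of_pos (hθ0 i) _) hSpos
  have hkey : ∀ i, φ + (η / γ) * s i = a i * (φ * n + (η / γ) * x) := by
    intro i; rw [hs]; field_simp; ring
  set M := φ * n + (η / γ) * x with hMdef
  have hMpos : 0 < M := by
    have i0 : Fin n := ⟨0, hn⟩
    have h := hspos i0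
    rw [hkey i0] at h
    exact (mul_pos_iff_of_pos_left (hapos i0)).mp h
  have hterm : ∀ i, θ i * u (s i) =
      (γ / (1 - γ)) * (θ i ^ (1 / γ) * M ^ (1 - γ) / S ^ (1 - γ) - θ i) := by
    intro i
    rw [hu, hkey i, Real.mul_rpow (hapos i).le hMpos.le, ha i,
      Real.div_rpow (Real.rpow_nonneg (hθ0 i).le _) hSpos.le]
    have h1 : θ i * (θ i ^ (1 / γ)) ^ (1 - γ) = θ i ^ (1 / γ) := by
      rw [← Real.rpow_mul (hθ0 i).le]
      nth_rewrite 1 [← Real.rpow_one (θ i)]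
      rw [← Real.rpow_add (hθ0 i)]
      congr 1; field_simp; ring
    linear_combination (γ / (1 - γ)) * M ^ (1 - γ) / S ^ (1 - γ) * h1
  calc ∑ i, θ i * u (s i)
      = ∑ i, (γ / (1 - γ)) * (θ i ^ (1 / γ) * M ^ (1 - γ) / S ^ (1 - γ) - θ i) :=
        Finset.sum_congr rfl fun i _ => hterm i
    _ = (γ / (1 - γ)) * (S * M ^ (1 - γ) / S ^ (1 - γ) - 1) := by
        rw [← Finset.mul_sum, Finset.sum_sub_distrib, hθsum]
        congr 1
        rw [← Finset.sum_div, ← Finset.sum_mul]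
    _ = (γ / (1 - γ)) * (S ^ γ * M ^ (1 - γ) - 1) := by
        have h2 : S / S ^ (1 - γ) = S ^ γ := by
          rw [eq_comm, eq_div_iff (Real.rpow_pos_of_pos hSpos _).ne', ← Real.rpow_add hSpos,
            show γ + (1 - γ) = 1 by ring, Real.rpow_one]
        have h3 : S * M ^ (1 - γ) / S ^ (1 - γ) = S / S ^ (1 - γ) * M ^ (1 - γ) := by ring
        rw [h3, h2]
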